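/- arXiv:2106.02398 — 6 statements merged into one kernel-verified Lean document; each statement's English description precedes it below -/
import Mathlib

section
/- Let σ(z) = 1/(1+e^(−z)) and let k > 0. Define d_k = σ(k+1) − σ(k). Then for any b with |b| ≤ k and any a ∈ ℝ, (a−b)(σ(a)−σ(b)) ≥ d_k |a−b| − d_k. -/
lemma sig_mono : Monotone fun z : ℝ => (1 + Real.exp (-z))⁻¹ := by
  intro x y hxy
  have h1 : (0:ℝ) < 1 + Real.exp (-y) := by positivity
  have h2 : Real.exp (-y) ≤ Real.exp (-x) := Real.exp_le_exp.2 (by linarith)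
  exact inv_anti₀ h1 (by linarith)

lemma step_ge (k t : ℝ) (h1 : t ≤ k) (h2 : -(1+k) ≤ t) :
    (1 + Real.exp (-(k+1)))⁻¹ - (1 + Real.exp (-k))⁻¹ ≤
    (1 + Real.exp (-(t+1)))⁻¹ - (1 + Real.exp (-t))⁻¹ := by
  have e1 : Real.exp (-(t+1)) = Real.exp (-t) * Real.exp (-1) := by
    rw [← Real.exp_add]; ring_nf
  have e2 : Real.exp (-(k+1)) = Real.exp (-k) * Real.exp (-1) := by
    rw [← Real.exp_add]; ring_nf
  set u := Real.exp (-t) with hu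
  set v := Real.exp (-k) with hv
  set w := Real.exp (-1) with hw
  have hu0 : 0 < u := Real.exp_pos _
  have hv0 : 0 < v := Real.exp_pos _
  have hw0 : 0 < w := Real.exp_pos _
  have hvu : v ≤ u := Real.exp_le_exp.2 (by linarith)
  have hw1 : w < 1 := by
    rw [hw]; exact Real.exp_lt_one_iff.2 (by norm_num)
  have huvw : u * v * w ≤ 1 := by
    have : u * v * w = Real.exp (-t + -k + -1) := by
      rw [hu, hv, hw, ← Real.exp_add, ← Real.exp_add]
    rw [this]
    exact Real.exp_le_one_iff.2 (by linarith)
  rw [e1, e2]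
  have d1 : (0:ℝ) < 1 + u * w := by positivity
  have d2 : (0:ℝ) < 1 + u := by positivity
  have d3 : (0:ℝ) < 1 + v * w := by positivity
  have d4 : (0:ℝ) < 1 + v := by positivity
  have key : v * (1 - w) * ((1 + u * w) * (1 + u)) ≤ u * (1 - w) * ((1 + v * w) * (1 + v)) := by
    nlinarith [mul_nonneg (sub_nonneg.2 hvu) (sub_nonneg.2 huvw), hw0.le, hu0.le, hv0.le]
  have lhs_eq : (1 + v * w)⁻¹ - (1 + v)⁻¹ = v * (1 - w) / ((1 + v * w) * (1 + v)) := by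
    field_simp; ring
  have rhs_eq : (1 + u * w)⁻¹ - (1 + u)⁻¹ = u * (1 - w) / ((1 + u * w) * (1 + u)) := by
    field_simp; ring
  rw [lhs_eq, rhs_eq]
  rw [div_le_div_iff₀ (by positivity) (by positivity)]
  linarith [key]

/-- For the logistic sigmoid `σ`, `k > 0` and `d_k = σ(k+1) - σ(k)`: for any `|b| ≤ k`
and any `a`, `(a-b)(σ a - σ b) ≥ d_k |a-b| - d_k`. -/
theorem stmt_4 (σ : ℝ → ℝ) (hσ : ∀ z, σ z = (1 + Real.exp (-z))⁻¹)
    (k : ℝ) (hk : 0 < k) (b : ℝ) (hb : |b| ≤ k) (a : ℝ) :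
    (σ (k + 1) - σ k) * |a - b| - (σ (k + 1) - σ k) ≤ (a - b) * (σ a - σ b) := by
  have hmono : ∀ x y : ℝ, x ≤ y → σ x ≤ σ y := by
    intro x y hxy
    rw [hσ x, hσ y]
    exact sig_mono hxy
  have hb1 : -k ≤ b := neg_le_of_abs_le hb
  have hb2 : b ≤ k := le_of_abs_le hb
  set d := σ (k + 1) - σ k with hd
  have hd0 : 0 ≤ d := sub_nonneg.2 (hmono k (k+1) (by linarith))
  have hprod : 0 ≤ (a - b) * (σ a - σ b) := by
    rcases le_total a b with h | h
    · nlinarith [hmono a b h]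
    · exact mul_nonneg (by linarith) (by linarith [hmono b a h])
  rcases le_or_gt (|a - b|) 1 with hab | hab
  · have : d * |a - b| ≤ d := by
      nlinarith [abs_nonneg (a - b)]
    linarith
  · rcases le_total b a with h | h
    · have hab' : 1 < a - b := by rwa [abs_of_nonneg (by linarith)] at hab
      have hstep : d ≤ σ (b + 1) - σ b := by
        rw [hd, hσ (k+1), hσ k, hσ (b+1), hσ b]
        exact step_ge k b hb2 (by linarith)
      have hma : σ (b + 1) ≤ σ a := hmono _ _ (by linarith)
      have : d * (a - b) ≤ (a - b) * (σ a - σ b) := by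
        nlinarith
      rw [abs_of_nonneg (by linarith : (0:ℝ) ≤ a - b)]
      nlinarith
    · have hab' : 1 < b - a := by
        rw [abs_of_nonpos (by linarith : a - b ≤ 0)] at hab; linarith
      have hstep : d ≤ σ b - σ (b - 1) := by
        have hst := step_ge k (b - 1) (by linarith) (by linarith)
        rw [show b - 1 + 1 = b by ring] at hst
        rw [hd, hσ (k+1), hσ k, hσ b, hσ (b-1)]
        exact hst
      have hma : σ a ≤ σ (b - 1) := hmono _ _ (by linarith)
      have : d * (b - a) ≤ (a - b) * (σ a - σ b) := by
        nlinarith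
      rw [abs_of_nonpos (by linarith : a - b ≤ 0)]
      nlinarith
end

section
/- Let f : ℝ → [0,∞) be strictly convex and define F(ρ, w) = f(ρ) + |ρ − w|. Then for every w ∈ ℝ, F(·, w) attains a unique minimizer ρ*(w), and the map w ↦ ρ*(w) is nondecreasing. -/
lemma abs_convexOn (w : ℝ) : ConvexOn ℝ Set.univ (fun ρ : ℝ => |ρ - w|) := by
  constructor
  · exact convex_univ
  · intro x _ y _ a b ha hb hab
    simp only [smul_eq_mul]
    have h1 : a * x + b * y - w = a * (x - w) + b * (y - w) := by
      have : a * w + b * w = w := by rw [← add_mul, hab, one_mul]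
      ring_nf; linarith [this]
    rw [h1]
    calc |a * (x - w) + b * (y - w)| ≤ |a * (x - w)| + |b * (y - w)| := abs_add_le _ _
      _ = a * |x - w| + b * |y - w| := by
          rw [abs_mul, abs_mul, abs_of_nonneg ha, abs_of_nonneg hb]

/-- For strictly convex nonnegative `f : ℝ → ℝ`, the function `F(ρ,w) = f(ρ) + |ρ - w|`
admits for each `w` a unique minimizer `ρ*(w)` in `ρ`, and `w ↦ ρ*(w)` is nondecreasing. -/
theorem stmt_14 (f : ℝ → ℝ) (hf0 : ∀ x, 0 ≤ f x)
    (hf : StrictConvexOn ℝ Set.univ f) :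
    ∃ ρs : ℝ → ℝ,
      (∀ w, (∀ ρ, f (ρs w) + |ρs w - w| ≤ f ρ + |ρ - w|) ∧
        (∀ ρ, (∀ ρ', f ρ + |ρ - w| ≤ f ρ' + |ρ' - w|) → ρ = ρs w)) ∧
      Monotone ρs := by
  have hFconv : ∀ w, StrictConvexOn ℝ Set.univ (fun ρ => f ρ + |ρ - w|) :=
    fun w => hf.add_convexOn (abs_convexOn w)
  have hfc : Continuous f :=
    continuousOn_univ.mp (hf.convexOn.continuousOn isOpen_univ)
  have hex : ∀ w, ∃ ρ, ∀ ρ', f ρ + |ρ - w| ≤ f ρ' + |ρ' - w| := by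
    intro w
    set K := Set.Icc (w - (f w + 1)) (w + (f w + 1)) with hK
    have hwK : w ∈ K := by
      constructor <;> [skip; skip] <;> nlinarith [hf0 w]
    obtain ⟨ρ, hρK, hmin⟩ := isCompact_Icc.exists_isMinOn ⟨w, hwK⟩
      ((hfc.add ((continuous_id.sub continuous_const).abs)).continuousOn)
    refine ⟨ρ, fun ρ' => ?_⟩
    by_cases h : ρ' ∈ K
    · exact hmin h
    · have h1 : f w + 1 < |ρ' - w| := by
        simp only [hK, Set.mem_Icc, not_and_or, not_le] at h
        rcases abs_cases (ρ' - w) with ⟨he, _⟩ | ⟨he, _⟩ <;> rcases h with h | h <;> linarith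
      calc f ρ + |ρ - w| ≤ f w + |w - w| := hmin hwK
        _ = f w := by simp
        _ ≤ f ρ' + |ρ' - w| := by linarith [hf0 ρ']
  choose ρs hρs using hex
  have huniq : ∀ w ρ, (∀ ρ', f ρ + |ρ - w| ≤ f ρ' + |ρ' - w|) → ρ = ρs w := by
    intro w ρ hρ
    exact (hFconv w).eq_of_isMinOn (isMinOn_iff.mpr fun x _ => hρ x)
      (isMinOn_iff.mpr fun x _ => hρs w x) (Set.mem_univ _) (Set.mem_univ _)
  refine ⟨ρs, fun w => ⟨hρs w, huniq w⟩, ?_⟩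
  intro w₁ w₂ hw
  by_contra hlt
  push_neg at hlt
  have h1 : f (ρs w₁) + |ρs w₁ - w₁| ≤ f (ρs w₂) + |ρs w₂ - w₁| := hρs w₁ (ρs w₂)
  have h2 : f (ρs w₂) + |ρs w₂ - w₂| ≤ f (ρs w₁) + |ρs w₁ - w₂| := hρs w₂ (ρs w₁)
  have key : |ρs w₁ - w₂| + |ρs w₂ - w₁| ≤ |ρs w₁ - w₁| + |ρs w₂ - w₂| := by
    rcases abs_cases (ρs w₁ - w₂) with ⟨e3, s3⟩ | ⟨e3, s3⟩ <;>
    rcases abs_cases (ρs w₂ - w₁) with ⟨e4, s4⟩ | ⟨e4, s4⟩ <;>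
    rcases abs_cases (ρs w₁ - w₁) with ⟨e5, s5⟩ | ⟨e5, s5⟩ <;>
    rcases abs_cases (ρs w₂ - w₂) with ⟨e6, s6⟩ | ⟨e6, s6⟩ <;> linarith
  have h3 : ∀ ρ', f (ρs w₂) + |ρs w₂ - w₁| ≤ f ρ' + |ρ' - w₁| :=
    fun ρ' => le_trans (by linarith) (hρs w₁ ρ')
  have := huniq w₁ (ρs w₂) h3
  rw [this] at hlt
  exact lt_irrefl _ hlt
end

section
/- Let f : ℝ → [0,∞) be strictly convex and ρ*(w) = argmin_ρ (f(ρ) + |ρ − w|). Then for all θ, w ∈ ℝ, |ρ*(θ) − θ| ≤ |ρ*(w) − θ|. In other words, reporting one's true value θ minimizes the distance from ρ*(w) to θ over all possible reports w. -/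
/-- Convexity helper: if `p < θ < q`, `f q < f p + (q - p)` and `f p + (θ - p) < f θ`,
we contradict convexity. -/
lemma stmt_16_aux1 (f : ℝ → ℝ) (hf : ConvexOn ℝ Set.univ f)
    (p θ q : ℝ) (hpθ : p < θ) (hθq : θ < q)
    (h2 : f q < f p + (q - p)) (h3 : f p + (θ - p) < f θ) : False := by
  have hqp : (0:ℝ) < q - p := by linarith
  have hμ0 : 0 ≤ (q - θ)/(q - p) := div_nonneg (by linarith) hqp.le
  have hν0 : 0 < (θ - p)/(q - p) := div_pos (by linarith) hqp
  have hsum : (q - θ)/(q - p) + (θ - p)/(q - p) = 1 := by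
    field_simp
    ring
  have hc := hf.2 (Set.mem_univ p) (Set.mem_univ q) hμ0 hν0.le hsum
  have hθ : ((q - θ)/(q - p)) • p + ((θ - p)/(q - p)) • q = θ := by
    simp only [smul_eq_mul]
    field_simp
    ring
  rw [hθ] at hc
  simp only [smul_eq_mul] at hc
  have hmul : (θ - p)/(q - p) * (q - p) = θ - p := div_mul_cancel₀ _ hqp.ne'
  have hk : (θ - p)/(q - p) * f q < (θ - p)/(q - p) * (f p + (q - p)) :=
    mul_lt_mul_of_pos_left h2 hν0
  have he1 : (θ - p)/(q - p) * (f p + (q - p)) = (θ - p)/(q - p) * f p + (θ - p) := by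
    rw [mul_add, hmul]
  have he2 : (q - θ)/(q - p) * f p + (θ - p)/(q - p) * f p = f p := by
    rw [← add_mul, hsum, one_mul]
  linarith

/-- Mirror-image convexity helper. -/
lemma stmt_16_aux2 (f : ℝ → ℝ) (hf : ConvexOn ℝ Set.univ f)
    (p θ q : ℝ) (hpθ : p < θ) (hθq : θ < q)
    (h2 : f p < f q + (q - p)) (h3 : f q + (q - θ) < f θ) : False := by
  have hqp : (0:ℝ) < q - p := by linarith
  have hμ0 : 0 < (q - θ)/(q - p) := div_pos (by linarith) hqp
  have hν0 : 0 ≤ (θ - p)/(q - p) := div_nonneg (by linarith) hqp.le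
  have hsum : (q - θ)/(q - p) + (θ - p)/(q - p) = 1 := by
    field_simp
    ring
  have hc := hf.2 (Set.mem_univ p) (Set.mem_univ q) hμ0.le hν0 hsum
  have hθ : ((q - θ)/(q - p)) • p + ((θ - p)/(q - p)) • q = θ := by
    simp only [smul_eq_mul]
    field_simp
    ring
  rw [hθ] at hc
  simp only [smul_eq_mul] at hc
  have hmul : (q - θ)/(q - p) * (q - p) = q - θ := div_mul_cancel₀ _ hqp.ne'
  have hk : (q - θ)/(q - p) * f p < (q - θ)/(q - p) * (f q + (q - p)) :=
    mul_lt_mul_of_pos_left h2 hμ0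
  have he1 : (q - θ)/(q - p) * (f q + (q - p)) = (q - θ)/(q - p) * f q + (q - θ) := by
    rw [mul_add, hmul]
  have he2 : (q - θ)/(q - p) * f q + (θ - p)/(q - p) * f q = f q := by
    rw [← add_mul, hsum, one_mul]
  linarith

/-- Strategyproofness in dimension 1: reporting `θ` truthfully minimizes the distance
from `ρ*(w)` to `θ`, where `ρ*(w)` minimizes `ρ ↦ f(ρ) + |ρ - w|`. -/
theorem stmt_16 (f : ℝ → ℝ) (hf0 : ∀ x, 0 ≤ f x)
    (hf : StrictConvexOn ℝ Set.univ f)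
    (ρs : ℝ → ℝ)
    (hρs : ∀ w ρ, ρ ≠ ρs w → f (ρs w) + |ρs w - w| < f ρ + |ρ - w|) :
    ∀ θ w : ℝ, |ρs θ - θ| ≤ |ρs w - θ| := by
  have hfix : ∀ w, ρs (ρs w) = ρs w := by
    intro w
    by_contra hne
    have h1 := hρs (ρs w) (ρs w) (fun h => hne h.symm)
    have h2 := hρs w (ρs (ρs w)) hne
    have htri : |ρs (ρs w) - w| ≤ |ρs (ρs w) - ρs w| + |ρs w - w| := abs_sub_le _ _ _
    simp only [sub_self, abs_zero] at h1
    linarith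
  intro θ w
  by_cases hxa : ρs w = ρs θ
  · rw [hxa]
  by_contra hcon
  push_neg at hcon
  set a := ρs θ with ha
  set x := ρs w with hx
  have haθ : a ≠ θ := by
    intro h
    rw [h] at hcon
    simp at hcon
    exact absurd hcon (not_lt.mpr (abs_nonneg _))
  have H1 : f a + |a - θ| < f x + |x - θ| := hρs θ x hxa
  have H3 : f a + |a - θ| < f θ := by
    have h := hρs θ θ (fun h => haθ h.symm)
    simpa using h
  have H2 : f x < f a + |a - x| := by
    have h := hρs (ρs w) a (by rw [hfix]; exact fun h => hxa h.symm)
    rw [hfix] at h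
    simp only [sub_self, abs_zero, add_zero] at h
    exact h
  rcases lt_trichotomy x θ with h1 | h1 | h1
  · rcases lt_trichotomy a θ with h2 | h2 | h2
    · -- a < θ, x < θ; from hcon a < x : segment case
      have hax : a < x := by
        rw [abs_of_neg (by linarith : x - θ < 0), abs_of_neg (by linarith : a - θ < 0)] at hcon
        linarith
      rw [abs_of_neg (by linarith : x - θ < 0), abs_of_neg (by linarith : a - θ < 0)] at H1
      rw [abs_of_neg (by linarith : a - x < 0)] at H2
      linarith
    · exact absurd h2 haθ
    · -- x < θ < a : aux2
      rw [abs_of_pos (by linarith : (0:ℝ) < a - θ)] at H3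
      rw [abs_of_pos (by linarith : (0:ℝ) < a - x)] at H2
      exact stmt_16_aux2 f hf.convexOn x θ a h1 h2 H2 H3
  · -- x = θ
    rw [h1] at H1 H2
    simp only [sub_self, abs_zero, add_zero] at H1
    linarith
  · rcases lt_trichotomy a θ with h2 | h2 | h2
    · -- a < θ < x : aux1
      rw [abs_of_neg (by linarith : a - θ < 0)] at H3
      rw [abs_of_neg (by linarith : a - x < 0)] at H2
      exact stmt_16_aux1 f hf.convexOn a θ x h2 h1 (by linarith) (by linarith)
    · exact absurd h2 haθ
    · -- θ < x, θ < a; from hcon x < a : segment case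
      have hax : x < a := by
        rw [abs_of_pos (by linarith : (0:ℝ) < x - θ), abs_of_pos (by linarith : (0:ℝ) < a - θ)] at hcon
        linarith
      rw [abs_of_pos (by linarith : (0:ℝ) < x - θ), abs_of_pos (by linarith : (0:ℝ) < a - θ)] at H1
      rw [abs_of_pos (by linarith : (0:ℝ) < a - x)] at H2
      linarith
end

section
/- Let f, g : ℝ → [0,∞) be strictly convex, ρ*(w) = argmin_ρ (f(ρ) + |ρ − w|) and τ*(ρ) = argmin_t (g(t) + |ρ − t|). Then for all θ, w ∈ ℝ, |τ*(ρ*(θ)) − θ| ≤ |τ*(ρ*(w)) − θ|. -/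
private lemma fix_aux (f h : ℝ → ℝ)
    (hm : ∀ w ρ, ρ ≠ h w → f (h w) + |h w - w| < f ρ + |ρ - w|) (w : ℝ) :
    h (h w) = h w := by
  by_contra hne
  have h1 := hm (h w) (h w) (fun e => hne e.symm)
  have h2 := hm w (h (h w)) hne
  have htri : |h (h w) - w| ≤ |h (h w) - h w| + |h w - w| := abs_sub_le _ _ _
  rw [sub_self, abs_zero, add_zero] at h1
  linarith

private lemma mono_aux (f h : ℝ → ℝ)
    (hm : ∀ w ρ, ρ ≠ h w → f (h w) + |h w - w| < f ρ + |ρ - w|)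
    (u v : ℝ) (huv : u ≤ v) : h u ≤ h v := by
  by_contra hlt
  push_neg at hlt
  have hne : h u ≠ h v := ne_of_gt hlt
  have h1 := hm u (h v) hne.symm
  have h2 := hm v (h u) hne
  rcases abs_cases (h u - u) with ⟨e1, _⟩ | ⟨e1, _⟩ <;>
  rcases abs_cases (h v - v) with ⟨e2, _⟩ | ⟨e2, _⟩ <;>
  rcases abs_cases (h v - u) with ⟨e3, _⟩ | ⟨e3, _⟩ <;>
  rcases abs_cases (h u - v) with ⟨e4, _⟩ | ⟨e4, _⟩ <;>
  linarith

private lemma between_aux (f h : ℝ → ℝ) (hconv : ConvexOn ℝ Set.univ f)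
    (hm : ∀ w ρ, ρ ≠ h w → f (h w) + |h w - w| < f ρ + |ρ - w|)
    (θ p : ℝ) (hp : h p = p) :
    min θ p ≤ h θ ∧ h θ ≤ max θ p := by
  have hfix : ∀ x, x ≠ p → f p < f x + |x - p| := by
    intro x hx
    have := hm p x (by rw [hp]; exact hx)
    rwa [hp, sub_self, abs_zero, add_zero] at this
  constructor
  · by_contra hc
    push_neg at hc
    have htθ : h θ < θ := lt_of_lt_of_le hc (min_le_left _ _)
    have htp : h θ < p := lt_of_lt_of_le hc (min_le_right _ _)
    have hne : θ ≠ h θ := ne_of_gt htθ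
    have hθt := hm θ θ hne
    rw [sub_self, abs_zero, add_zero, abs_of_neg (by linarith : h θ - θ < 0)] at hθt
    rcases lt_or_ge p θ with hpθ | hθp
    · have h2 := hfix (h θ) (ne_of_lt htp)
      rw [abs_of_neg (by linarith : h θ - p < 0)] at h2
      have h3 := hm θ p (ne_of_lt htp).symm
      rw [abs_of_neg (by linarith : h θ - θ < 0), abs_of_neg (by linarith : p - θ < 0)] at h3
      linarith
    · rcases eq_or_lt_of_le hθp with rfl | hθp'
      · exact absurd hp (ne_of_lt htθ)
      · have hslope := hconv.slope_mono_adjacent (Set.mem_univ (h θ)) (Set.mem_univ p) htθ hθp'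
        have h2 := hfix θ (ne_of_lt hθp')
        rw [abs_of_neg (by linarith : θ - p < 0)] at h2
        have hd1 : (f p - f θ) / (p - θ) < 1 := by
          rw [div_lt_one (by linarith)]; linarith
        have hd2 : (f θ - f (h θ)) / (θ - h θ) < 1 := lt_of_le_of_lt hslope hd1
        rw [div_lt_one (by linarith)] at hd2
        linarith
  · by_contra hc
    push_neg at hc
    have htθ : θ < h θ := lt_of_le_of_lt (le_max_left _ _) hc
    have htp : p < h θ := lt_of_le_of_lt (le_max_right _ _) hc
    have hne : θ ≠ h θ := ne_of_lt htθ
    have hθt := hm θ θ hne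
    rw [sub_self, abs_zero, add_zero, abs_of_pos (by linarith : 0 < h θ - θ)] at hθt
    rcases lt_or_ge θ p with hθp | hpθ
    · have h2 := hfix (h θ) (ne_of_gt htp)
      rw [abs_of_pos (by linarith : 0 < h θ - p)] at h2
      have h3 := hm θ p (ne_of_gt htp).symm
      rw [abs_of_pos (by linarith : 0 < h θ - θ), abs_of_pos (by linarith : 0 < p - θ)] at h3
      linarith
    · rcases eq_or_lt_of_le hpθ with rfl | hpθ'
      · exact absurd hp (ne_of_gt htθ)
      · have hslope := hconv.slope_mono_adjacent (Set.mem_univ p) (Set.mem_univ (h θ)) hpθ' htθ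
        have h2 := hfix θ (ne_of_gt hpθ')
        rw [abs_of_pos (by linarith : 0 < θ - p)] at h2
        have hd1 : (-1 : ℝ) < (f θ - f p) / (θ - p) := by
          rw [lt_div_iff₀ (by linarith)]; linarith
        have hd2 : (-1 : ℝ) < (f (h θ) - f θ) / (h θ - θ) := lt_of_lt_of_le hd1 hslope
        rw [lt_div_iff₀ (by linarith)] at hd2
        linarith

/-- Composition strategyproofness in dimension 1: with `ρ*(w)` the minimizer of
`ρ ↦ f(ρ) + |ρ - w|` and `τ*(ρ)` the minimizer of `t ↦ g(t) + |ρ - t|`,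
`|τ*(ρ*(θ)) - θ| ≤ |τ*(ρ*(w)) - θ|` for all `θ, w`. -/
theorem stmt_17 (f g : ℝ → ℝ)
    (hf0 : ∀ x, 0 ≤ f x) (hg0 : ∀ x, 0 ≤ g x)
    (hf : StrictConvexOn ℝ Set.univ f) (hg : StrictConvexOn ℝ Set.univ g)
    (ρs : ℝ → ℝ)
    (hρs : ∀ w ρ, ρ ≠ ρs w → f (ρs w) + |ρs w - w| < f ρ + |ρ - w|)
    (τs : ℝ → ℝ)
    (hτs : ∀ ρ t, t ≠ τs ρ → g (τs ρ) + |ρ - τs ρ| < g t + |ρ - t|) :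
    ∀ θ w : ℝ, |τs (ρs θ) - θ| ≤ |τs (ρs w) - θ| := by
  have hτ' : ∀ ρ t, t ≠ τs ρ → g (τs ρ) + |τs ρ - ρ| < g t + |t - ρ| := by
    intro ρ t ht
    have := hτs ρ t ht
    rwa [abs_sub_comm ρ (τs ρ), abs_sub_comm ρ t] at this
  intro θ w
  have fixρ : ρs (ρs w) = ρs w := fix_aux f ρs hρs w
  have fixτ : τs (τs (ρs w)) = τs (ρs w) := fix_aux g τs hτ' (ρs w)
  have b1 := between_aux f ρs hf.convexOn hρs θ (ρs w) fixρ
  have b2 := between_aux g τs hg.convexOn hτ' (ρs θ) (τs (ρs w)) fixτ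
  have hub : τs (ρs θ) ≤ max θ (τs (ρs w)) := by
    rcases le_total (ρs θ) (ρs w) with hle | hge
    · exact le_trans (mono_aux g τs hτ' _ _ hle) (le_max_right _ _)
    · rcases le_total θ (ρs w) with hθs | hsθ
      · have heq : ρs θ = ρs w := le_antisymm (by have := b1.2; rwa [max_eq_right hθs] at this) hge
        rw [heq]; exact le_max_right _ _
      · have hrθ : ρs θ ≤ θ := by have := b1.2; rwa [max_eq_left hsθ] at this
        exact le_trans b2.2 (max_le_max hrθ (le_refl _))
  have hlb : min θ (τs (ρs w)) ≤ τs (ρs θ) := by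
    rcases le_total (ρs w) (ρs θ) with hle | hge
    · exact le_trans (min_le_right _ _) (mono_aux g τs hτ' _ _ hle)
    · rcases le_total (ρs w) θ with hsθ | hθs
      · have heq : ρs θ = ρs w := le_antisymm hge (by have := b1.1; rwa [min_eq_right hsθ] at this)
        rw [heq]; exact min_le_right _ _
      · have hrθ : θ ≤ ρs θ := by have := b1.1; rwa [min_eq_left hθs] at this
        exact le_trans (min_le_min hrθ (le_refl _)) b2.1
  rw [abs_le]
  constructor
  · have h0 := abs_nonneg (τs (ρs w) - θ)
    have h1 := neg_abs_le (τs (ρs w) - θ)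
    rcases le_total θ (τs (ρs w)) with hc | hc
    · rw [min_eq_left hc] at hlb; linarith
    · rw [min_eq_right hc] at hlb; linarith
  · have h0 := abs_nonneg (τs (ρs w) - θ)
    have h1 := le_abs_self (τs (ρs w) - θ)
    rcases le_total θ (τs (ρs w)) with hc | hc
    · rw [max_eq_right hc] at hub; linarith
    · rw [max_eq_left hc] at hub; linarith
end

section
/- Consider the function L(ρ, θ) = C(ρ)^q + Σ_{n=1}^N λ_n N_n(θ_n − ρ) + Σ_{n=1}^N ℓ_n(θ_n), where C, N_1,…,N_N are norms on ℝ^d, q > 1, λ_n > 0, the unit ball of C is strictly convex, and each ℓ_n : ℝ^d → [0,∞) is strictly convex and continuous. Then L attains a minimum on ℝ^d × (ℝ^d)^N, and this minimizer is unique. -/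
open Finset in
lemma subadd_sum {ι V : Type*} [AddCommMonoid V] (C : V → ℝ)
    (h0 : C 0 = 0) (hadd : ∀ x y, C (x + y) ≤ C x + C y)
    (s : Finset ι) (g : ι → V) : C (∑ i ∈ s, g i) ≤ ∑ i ∈ s, C (g i) := by
  classical
  induction s using Finset.cons_induction with
  | empty => simp [h0]
  | cons a s ha ih =>
      rw [Finset.sum_cons, Finset.sum_cons]
      exact (hadd _ _).trans (by linarith)

lemma normlike_zero {d : ℕ} (C : (Fin d → ℝ) → ℝ)
    (hsmul : ∀ (c : ℝ) x, C (c • x) = |c| * C x) : C 0 = 0 := by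
  have := hsmul 0 0
  simpa using this

lemma normlike_continuous {d : ℕ} (C : (Fin d → ℝ) → ℝ)
    (hnn : ∀ x, 0 ≤ C x)
    (hadd : ∀ x y, C (x + y) ≤ C x + C y)
    (hsmul : ∀ (c : ℝ) x, C (c • x) = |c| * C x) : Continuous C := by
  have h0 : C 0 = 0 := normlike_zero C hsmul
  set K : ℝ := ∑ i, C (Pi.single i 1) with hK
  have hKnn : 0 ≤ K := Finset.sum_nonneg fun i _ => hnn _
  have hbound : ∀ z : Fin d → ℝ, C z ≤ K * ‖z‖ := by
    intro z
    have hz : z = ∑ i, (z i) • (Pi.single i (1:ℝ) : Fin d → ℝ) := by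
      have : ∀ i, (z i) • (Pi.single i (1:ℝ) : Fin d → ℝ) = Pi.single i (z i) := by
        intro i
        rw [← Pi.single_smul]
        simp
      simp_rw [this]
      exact (Finset.univ_sum_single z).symm
    calc C z = C (∑ i, (z i) • (Pi.single i (1:ℝ) : Fin d → ℝ)) := by rw [← hz]
      _ ≤ ∑ i, C ((z i) • (Pi.single i (1:ℝ) : Fin d → ℝ)) := subadd_sum C h0 hadd _ _
      _ = ∑ i, |z i| * C (Pi.single i (1:ℝ) : Fin d → ℝ) := by simp_rw [hsmul]
      _ ≤ ∑ i, ‖z‖ * C (Pi.single i (1:ℝ) : Fin d → ℝ) := by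
          refine Finset.sum_le_sum fun i _ => ?_
          exact mul_le_mul_of_nonneg_right (by simpa [Real.norm_eq_abs] using norm_le_pi_norm z i) (hnn _)
      _ = K * ‖z‖ := by rw [← Finset.mul_sum, hK]; ring
  have hlip : LipschitzWith K.toNNReal C := by
    refine LipschitzWith.of_dist_le_mul fun x y => ?_
    rw [Real.dist_eq, Real.coe_toNNReal K hKnn, dist_eq_norm]
    rw [abs_sub_le_iff]
    constructor
    · have h1 : C x ≤ C (x - y) + C y := by
        have := hadd (x - y) y
        simpa using this
      linarith [hbound (x - y)]
    · have h1 : C y ≤ C (y - x) + C x := by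
        have := hadd (y - x) x
        simpa using this
      have h2 : C (y - x) = C (x - y) := by
        have := hsmul (-1) (x - y)
        simpa [neg_sub] using this
      linarith [hbound (x - y)]
  exact hlip.continuous

lemma normlike_lower {d : ℕ} (C : (Fin d → ℝ) → ℝ)
    (hnn : ∀ x, 0 ≤ C x)
    (hadd : ∀ x y, C (x + y) ≤ C x + C y)
    (hsmul : ∀ (c : ℝ) x, C (c • x) = |c| * C x)
    (hdef : ∀ x, C x = 0 → x = 0) :
    ∃ c > 0, ∀ x, c * ‖x‖ ≤ C x := by
  have h0 : C 0 = 0 := normlike_zero C hsmul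
  have hcont : Continuous C := normlike_continuous C hnn hadd hsmul
  rcases Nat.eq_zero_or_pos d with hd | hd
  · refine ⟨1, one_pos, fun x => ?_⟩
    subst hd
    have hx : x = 0 := Subsingleton.elim x 0
    rw [hx, h0, norm_zero, mul_zero]
  · haveI : Nonempty (Fin d) := ⟨⟨0, hd⟩⟩
    have hne : (Metric.sphere (0 : Fin d → ℝ) 1).Nonempty :=
      NormedSpace.sphere_nonempty.mpr zero_le_one
    obtain ⟨x₀, hx₀, hmin⟩ :=
      (isCompact_sphere (0 : Fin d → ℝ) 1).exists_isMinOn hne hcont.continuousOn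
    have hx₀norm : ‖x₀‖ = 1 := mem_sphere_zero_iff_norm.mp hx₀
    have hc : 0 < C x₀ := by
      rcases lt_or_eq_of_le (hnn x₀) with h | h
      · exact h
      · exfalso
        have := hdef x₀ h.symm
        rw [this] at hx₀norm
        simp at hx₀norm
    refine ⟨C x₀, hc, fun x => ?_⟩
    rcases eq_or_ne x 0 with rfl | hx
    · simp [h0]
    · have hr : 0 < ‖x‖ := norm_pos_iff.mpr hx
      set u : Fin d → ℝ := ‖x‖⁻¹ • x with hu
      have hunorm : ‖u‖ = 1 := by
        rw [hu, norm_smul, norm_inv, norm_norm, inv_mul_cancel₀ hr.ne']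
      have humem : u ∈ Metric.sphere (0 : Fin d → ℝ) 1 := mem_sphere_zero_iff_norm.mpr hunorm
      have hCu : C x₀ ≤ C u := hmin humem
      have hxu : x = ‖x‖ • u := by
        rw [hu, smul_smul, mul_inv_cancel₀ hr.ne', one_smul]
      have hCx : C x = ‖x‖ * C u := by
        conv_lhs => rw [hxu]
        rw [hsmul, abs_of_pos hr]
      calc C x₀ * ‖x‖ ≤ C u * ‖x‖ := by nlinarith
        _ = C x := by rw [hCx]; ring
lemma powq_strict {d : ℕ} (C : (Fin d → ℝ) → ℝ)
    (hnn : ∀ x, 0 ≤ C x)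
    (hadd : ∀ x y, C (x + y) ≤ C x + C y)
    (hsmul : ∀ (c : ℝ) x, C (c • x) = |c| * C x)
    (hdef : ∀ x, C x = 0 → x = 0)
    (hball : ∀ x y, x ≠ y → C x = 1 → C y = 1 →
      ∀ t : ℝ, 0 < t → t < 1 → C (t • x + (1 - t) • y) < 1)
    {q : ℝ} (hq : 1 < q) {x y : Fin d → ℝ} (hxy : x ≠ y) :
    C ((2⁻¹ : ℝ) • x + (2⁻¹ : ℝ) • y) ^ q < 2⁻¹ * C x ^ q + 2⁻¹ * C y ^ q := by
  have hq0 : 0 < q := lt_trans one_pos hq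
  have ha := hnn x
  have hb := hnn y
  have hu0 := hnn ((2⁻¹ : ℝ) • x + (2⁻¹ : ℝ) • y)
  have hu_le : C ((2⁻¹ : ℝ) • x + (2⁻¹ : ℝ) • y) ≤ 2⁻¹ * C x + 2⁻¹ * C y := by
    refine (hadd _ _).trans ?_
    rw [hsmul, hsmul, abs_of_pos (by norm_num : (0:ℝ) < 2⁻¹)]
  rcases eq_or_ne (C x) (C y) with hab | hab
  · have ha0 : 0 < C x := by
      rcases lt_or_eq_of_le ha with h | h
      · exact h
      · exfalso
        apply hxy
        rw [hdef x h.symm, hdef y (by rw [← hab, ← h])]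
    have key : C ((2⁻¹ : ℝ) • x + (2⁻¹ : ℝ) • y) < C x := by
      rcases lt_or_eq_of_le hu_le with h | h
      · rw [← hab] at h; linarith
      · exfalso
        set x' := (C x)⁻¹ • x with hx'
        set y' := (C x)⁻¹ • y with hy'
        have hCx' : C x' = 1 := by
          rw [hx', hsmul, abs_of_pos (inv_pos.mpr ha0), inv_mul_cancel₀ ha0.ne']
        have hCy' : C y' = 1 := by
          rw [hy', hsmul, abs_of_pos (inv_pos.mpr ha0), ← hab, inv_mul_cancel₀ ha0.ne']
        have hne : x' ≠ y' := by
          intro he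
          exact hxy (smul_right_injective (Fin d → ℝ) (inv_ne_zero ha0.ne') he)
        have := hball x' y' hne hCx' hCy' 2⁻¹ (by norm_num) (by norm_num)
        have hrw : (2⁻¹ : ℝ) • x' + ((1:ℝ) - 2⁻¹) • y' = (C x)⁻¹ • ((2⁻¹ : ℝ) • x + (2⁻¹ : ℝ) • y) := by
          rw [hx', hy']
          module
        rw [hrw, hsmul, abs_of_pos (inv_pos.mpr ha0), h, ← hab] at this
        rw [show (2⁻¹ : ℝ) * C x + 2⁻¹ * C x = C x by ring] at this
        rw [inv_mul_cancel₀ ha0.ne'] at this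
        exact lt_irrefl _ this
    have h1 : C ((2⁻¹ : ℝ) • x + (2⁻¹ : ℝ) • y) ^ q < C x ^ q := Real.rpow_lt_rpow hu0 key hq0
    have h2 : C x ^ q = 2⁻¹ * C x ^ q + 2⁻¹ * C y ^ q := by rw [← hab]; ring
    linarith
  · have h1 : C ((2⁻¹ : ℝ) • x + (2⁻¹ : ℝ) • y) ^ q ≤ (2⁻¹ * C x + 2⁻¹ * C y) ^ q :=
      Real.rpow_le_rpow hu0 hu_le hq0.le
    have h2 := (strictConvexOn_rpow hq).2 (Set.mem_Ici.mpr ha) (Set.mem_Ici.mpr hb) hab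
      (by norm_num : (0:ℝ) < 2⁻¹) (by norm_num : (0:ℝ) < 2⁻¹) (by norm_num)
    simp only [smul_eq_mul] at h2
    linarith
/-- The Licchavi loss as a function on the product space. -/
noncomputable def licL (d M : ℕ) (C : (Fin d → ℝ) → ℝ) (Nf : Fin M → (Fin d → ℝ) → ℝ) (q : ℝ)
    (lam : Fin M → ℝ) (ℓ : Fin M → (Fin d → ℝ) → ℝ)
    (p : (Fin d → ℝ) × (Fin M → Fin d → ℝ)) : ℝ :=
  C p.1 ^ q + ∑ n, lam n * Nf n (p.2 n - p.1) + ∑ n, ℓ n (p.2 n)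

/-- Existence and uniqueness of the minimizer of the Licchavi loss
`L(ρ, θ) = C(ρ)^q + Σ_n λ_n N_n(θ_n - ρ) + Σ_n ℓ_n(θ_n)`. -/
theorem stmt_18 (d M : ℕ)
    (C : (Fin d → ℝ) → ℝ)
    (hC_nonneg : ∀ x, 0 ≤ C x)
    (hC_add : ∀ x y, C (x + y) ≤ C x + C y)
    (hC_smul : ∀ (c : ℝ) x, C (c • x) = |c| * C x)
    (hC_def : ∀ x, C x = 0 → x = 0)
    (hC_ball : ∀ x y, x ≠ y → C x = 1 → C y = 1 →
      ∀ t : ℝ, 0 < t → t < 1 → C (t • x + (1 - t) • y) < 1)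
    (Nf : Fin M → (Fin d → ℝ) → ℝ)
    (hN_nonneg : ∀ n x, 0 ≤ Nf n x)
    (hN_add : ∀ n x y, Nf n (x + y) ≤ Nf n x + Nf n y)
    (hN_smul : ∀ n (c : ℝ) x, Nf n (c • x) = |c| * Nf n x)
    (hN_def : ∀ n x, Nf n x = 0 → x = 0)
    (q : ℝ) (hq : 1 < q)
    (lam : Fin M → ℝ) (hlam : ∀ n, 0 < lam n)
    (ℓ : Fin M → (Fin d → ℝ) → ℝ)
    (hℓ0 : ∀ n x, 0 ≤ ℓ n x)
    (hℓconv : ∀ n, StrictConvexOn ℝ Set.univ (ℓ n))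
    (hℓcont : ∀ n, Continuous (ℓ n)) :
    ∃! m : (Fin d → ℝ) × (Fin M → Fin d → ℝ),
      ∀ (ρ : Fin d → ℝ) (θ : Fin M → Fin d → ℝ),
        C m.1 ^ q + ∑ n, lam n * Nf n (m.2 n - m.1) + ∑ n, ℓ n (m.2 n)
          ≤ C ρ ^ q + ∑ n, lam n * Nf n (θ n - ρ) + ∑ n, ℓ n (θ n) := by
  classical
  set F := licL d M C Nf q lam ℓ with hF
  have hFdef : ∀ p : (Fin d → ℝ) × (Fin M → Fin d → ℝ),
      F p = C p.1 ^ q + ∑ n, lam n * Nf n (p.2 n - p.1) + ∑ n, ℓ n (p.2 n) := fun _ => rfl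
  have hq0 : 0 < q := lt_trans one_pos hq
  -- nonnegativity of the three pieces
  have ht1 : ∀ p : (Fin d → ℝ) × (Fin M → Fin d → ℝ), 0 ≤ C p.1 ^ q :=
    fun p => Real.rpow_nonneg (hC_nonneg _) q
  have ht2 : ∀ p : (Fin d → ℝ) × (Fin M → Fin d → ℝ),
      0 ≤ ∑ n, lam n * Nf n (p.2 n - p.1) :=
    fun p => Finset.sum_nonneg fun n _ => mul_nonneg (hlam n).le (hN_nonneg n _)
  have ht3 : ∀ p : (Fin d → ℝ) × (Fin M → Fin d → ℝ), 0 ≤ ∑ n, ℓ n (p.2 n) :=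
    fun p => Finset.sum_nonneg fun n _ => hℓ0 n _
  -- uniqueness part (via strict convexity at the midpoint)
  have huniq : ∀ p p' : (Fin d → ℝ) × (Fin M → Fin d → ℝ),
      (∀ z, F p ≤ F z) → (∀ z, F p' ≤ F z) → p = p' := by
    intro p p' hp hp'
    by_contra hne
    have heq : F p = F p' := le_antisymm (hp p') (hp' p)
    set mid : (Fin d → ℝ) × (Fin M → Fin d → ℝ) := (2⁻¹ : ℝ) • p + (2⁻¹ : ℝ) • p' with hmid
    have hmid1 : mid.1 = (2⁻¹ : ℝ) • p.1 + (2⁻¹ : ℝ) • p'.1 := rfl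
    have hmid2 : ∀ n, mid.2 n = (2⁻¹ : ℝ) • p.2 n + (2⁻¹ : ℝ) • p'.2 n := fun n => rfl
    -- the N-part is convex
    have hB : ∑ n, lam n * Nf n (mid.2 n - mid.1)
        ≤ 2⁻¹ * (∑ n, lam n * Nf n (p.2 n - p.1)) + 2⁻¹ * (∑ n, lam n * Nf n (p'.2 n - p'.1)) := by
      rw [Finset.mul_sum, Finset.mul_sum, ← Finset.sum_add_distrib]
      refine Finset.sum_le_sum fun n _ => ?_
      have hrw : mid.2 n - mid.1 = (2⁻¹ : ℝ) • (p.2 n - p.1) + (2⁻¹ : ℝ) • (p'.2 n - p'.1) := by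
        rw [hmid2, hmid1]; module
      have h1 : Nf n (mid.2 n - mid.1) ≤ 2⁻¹ * Nf n (p.2 n - p.1) + 2⁻¹ * Nf n (p'.2 n - p'.1) := by
        rw [hrw]
        refine (hN_add n _ _).trans ?_
        rw [hN_smul, hN_smul, abs_of_pos (by norm_num : (0:ℝ) < 2⁻¹)]
      calc lam n * Nf n (mid.2 n - mid.1)
          ≤ lam n * (2⁻¹ * Nf n (p.2 n - p.1) + 2⁻¹ * Nf n (p'.2 n - p'.1)) :=
            mul_le_mul_of_nonneg_left h1 (hlam n).le
        _ = 2⁻¹ * (lam n * Nf n (p.2 n - p.1)) + 2⁻¹ * (lam n * Nf n (p'.2 n - p'.1)) := by ring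
    -- the ℓ-part is convex, strictly if the θ components differ
    have hGweak : ∀ n, ℓ n (mid.2 n) ≤ 2⁻¹ * ℓ n (p.2 n) + 2⁻¹ * ℓ n (p'.2 n) := by
      intro n
      have := (hℓconv n).convexOn.2 (Set.mem_univ (p.2 n)) (Set.mem_univ (p'.2 n))
        (by norm_num : (0:ℝ) ≤ 2⁻¹) (by norm_num : (0:ℝ) ≤ 2⁻¹) (by norm_num)
      rw [hmid2]
      simpa using this
    have hfinal : F mid < 2⁻¹ * F p + 2⁻¹ * F p' := by
      rw [hFdef, hFdef, hFdef]
      rcases eq_or_ne p.1 p'.1 with h1 | h1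
      · -- ρ components equal, so θ components differ
        have h2 : p.2 ≠ p'.2 := by
          intro h2
          exact hne (Prod.ext h1 h2)
        obtain ⟨n₀, hn₀⟩ := Function.ne_iff.mp h2
        have hGn₀ : ℓ n₀ (mid.2 n₀) < 2⁻¹ * ℓ n₀ (p.2 n₀) + 2⁻¹ * ℓ n₀ (p'.2 n₀) := by
          have := (hℓconv n₀).2 (Set.mem_univ (p.2 n₀)) (Set.mem_univ (p'.2 n₀)) hn₀
            (by norm_num : (0:ℝ) < 2⁻¹) (by norm_num : (0:ℝ) < 2⁻¹) (by norm_num)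
          rw [hmid2]
          simpa using this
        have hG : ∑ n, ℓ n (mid.2 n)
            < 2⁻¹ * (∑ n, ℓ n (p.2 n)) + 2⁻¹ * (∑ n, ℓ n (p'.2 n)) := by
          rw [Finset.mul_sum, Finset.mul_sum, ← Finset.sum_add_distrib]
          exact Finset.sum_lt_sum (fun n _ => hGweak n) ⟨n₀, Finset.mem_univ _, hGn₀⟩
        have hmid1' : mid.1 = p.1 := by
          rw [hmid1, ← h1, ← add_smul]; norm_num
        have hA : C mid.1 ^ q = 2⁻¹ * C p.1 ^ q + 2⁻¹ * C p'.1 ^ q := by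
          rw [hmid1', ← h1]; ring
        linarith
      · have hA : C mid.1 ^ q < 2⁻¹ * C p.1 ^ q + 2⁻¹ * C p'.1 ^ q := by
          rw [hmid1]
          exact powq_strict C hC_nonneg hC_add hC_smul hC_def hC_ball hq h1
        have hG : ∑ n, ℓ n (mid.2 n)
            ≤ 2⁻¹ * (∑ n, ℓ n (p.2 n)) + 2⁻¹ * (∑ n, ℓ n (p'.2 n)) := by
          rw [Finset.mul_sum, Finset.mul_sum, ← Finset.sum_add_distrib]
          exact Finset.sum_le_sum fun n _ => hGweak n
        linarith
    have : F p ≤ F mid := hp mid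
    linarith
  -- existence part
  have hex : ∃ p : (Fin d → ℝ) × (Fin M → Fin d → ℝ), ∀ z, F p ≤ F z := by
    have hCc : Continuous C := normlike_continuous C hC_nonneg hC_add hC_smul
    have hNc : ∀ n, Continuous (Nf n) :=
      fun n => normlike_continuous _ (hN_nonneg n) (hN_add n) (hN_smul n)
    have hqpow : Continuous fun t : ℝ => t ^ q := by
      rw [continuous_iff_continuousAt]
      intro t
      exact Real.continuousAt_rpow_const t q (Or.inr hq0.le)
    have hFc : Continuous F := by
      rw [hF]
      unfold licL
      refine Continuous.add (Continuous.add ?_ ?_) ?_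
      · exact hqpow.comp (hCc.comp continuous_fst)
      · refine continuous_finset_sum _ fun n _ => ?_
        exact continuous_const.mul
          ((hNc n).comp (((continuous_apply n).comp continuous_snd).sub continuous_fst))
      · refine continuous_finset_sum _ fun n _ => ?_
        exact (hℓcont n).comp ((continuous_apply n).comp continuous_snd)
    obtain ⟨cC, hcC, hC_low⟩ := normlike_lower C hC_nonneg hC_add hC_smul hC_def
    have hN_low' : ∀ n, ∃ c > 0, ∀ x, c * ‖x‖ ≤ Nf n x :=
      fun n => normlike_lower _ (hN_nonneg n) (hN_add n) (hN_smul n) (hN_def n)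
    choose cN hcN hN_low using hN_low'
    set S : Set ((Fin d → ℝ) × (Fin M → Fin d → ℝ)) := {p | F p ≤ F 0} with hS
    have h0S : (0 : (Fin d → ℝ) × (Fin M → Fin d → ℝ)) ∈ S := by
      show F 0 ≤ F 0
      exact le_rfl
    have hL0 : 0 ≤ F 0 := by
      rw [hFdef]
      have := ht1 (0 : (Fin d → ℝ) × (Fin M → Fin d → ℝ))
      have := ht2 (0 : (Fin d → ℝ) × (Fin M → Fin d → ℝ))
      have := ht3 (0 : (Fin d → ℝ) × (Fin M → Fin d → ℝ))
      linarith
    have hSclosed : IsClosed S := isClosed_le hFc continuous_const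
    set R1 : ℝ := max 1 (F 0) / cC with hR1
    have hR1nn : 0 ≤ R1 := div_nonneg (le_trans zero_le_one (le_max_left _ _)) hcC.le
    set R2 : ℝ := ∑ n, F 0 / (lam n * cN n) with hR2
    have hR2nn : 0 ≤ R2 :=
      Finset.sum_nonneg fun n _ => div_nonneg hL0 (mul_nonneg (hlam n).le (hcN n).le)
    set R : ℝ := R1 + R2 with hRR
    have hRnn : 0 ≤ R := add_nonneg hR1nn hR2nn
    have hSsub : S ⊆ Metric.closedBall 0 R := by
      intro p hpS
      have hpF : F p ≤ F 0 := hpS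
      rw [hFdef] at hpF
      have h1 : C p.1 ^ q ≤ F 0 := by
        have := ht2 p; have := ht3 p; linarith
      have hCp : C p.1 ≤ max 1 (F 0) := by
        rcases le_or_gt (C p.1) 1 with h | h
        · exact h.trans (le_max_left _ _)
        · refine le_trans ?_ ((le_max_right _ _).trans' h1)
          calc C p.1 = C p.1 ^ (1:ℝ) := (Real.rpow_one _).symm
            _ ≤ C p.1 ^ q := Real.rpow_le_rpow_of_exponent_le h.le hq.le
      have hp1 : ‖p.1‖ ≤ R1 := by
        rw [hR1, le_div_iff₀ hcC]
        calc ‖p.1‖ * cC = cC * ‖p.1‖ := by ring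
          _ ≤ C p.1 := hC_low p.1
          _ ≤ max 1 (F 0) := hCp
      have hp2 : ∀ n, ‖p.2 n‖ ≤ R1 + R2 := by
        intro n
        have hterm : lam n * Nf n (p.2 n - p.1) ≤ F 0 := by
          have hsingle : lam n * Nf n (p.2 n - p.1) ≤ ∑ k, lam k * Nf k (p.2 k - p.1) :=
            Finset.single_le_sum (f := fun k => lam k * Nf k (p.2 k - p.1))
              (fun k _ => mul_nonneg (hlam k).le (hN_nonneg k _)) (Finset.mem_univ n)
          have := ht1 p; have := ht3 p; linarith
        have hdist : ‖p.2 n - p.1‖ ≤ F 0 / (lam n * cN n) := by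
          rw [le_div_iff₀ (mul_pos (hlam n) (hcN n))]
          have := hN_low n (p.2 n - p.1)
          nlinarith [hN_nonneg n (p.2 n - p.1), (hlam n), (hcN n)]
        have hdist2 : ‖p.2 n - p.1‖ ≤ R2 := by
          refine hdist.trans ?_
          rw [hR2]
          exact Finset.single_le_sum
            (fun k _ => div_nonneg hL0 (mul_nonneg (hlam k).le (hcN k).le))
            (Finset.mem_univ n)
        have : ‖p.2 n‖ ≤ ‖p.2 n - p.1‖ + ‖p.1‖ := by
          have := norm_add_le (p.2 n - p.1) p.1
          simpa using this
        linarith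
      rw [Metric.mem_closedBall, dist_zero_right, Prod.norm_def]
      refine max_le (by linarith) ?_
      rw [pi_norm_le_iff_of_nonneg hRnn]
      intro n
      exact hp2 n
    have hScompact : IsCompact S :=
      Metric.isCompact_of_isClosed_isBounded hSclosed
        (Metric.isBounded_closedBall.subset hSsub)
    obtain ⟨m, hmS, hmmin⟩ := hScompact.exists_isMinOn ⟨0, h0S⟩ hFc.continuousOn
    refine ⟨m, fun z => ?_⟩
    by_cases hz : z ∈ S
    · exact hmmin hz
    · have h1 : F m ≤ F 0 := hmmin h0S
      have h2 : F 0 < F z := lt_of_not_ge fun h => hz h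
      linarith
  obtain ⟨m, hm⟩ := hex
  exact ⟨m, fun ρ θ => hm (ρ, θ), fun m' hm' => huniq m' m (fun z => hm' z.1 z.2) hm⟩
end

section
/- Consider the loss L(ρ, θ) = C(ρ)^q + Σ_{n=1}^N λ_n N_n(ρ − θ_n) + Σ_n ℓ_n(θ_n) with q > 1, and suppose each independent loss gradient is bounded in the sense that any subgradient of N_n at any point has ℓ₂-norm at most B_n, and C(ρ) ≥ β₀‖ρ‖₂ for all ρ with β₀ > 0. Then any minimizer (ρ*, θ*) of L satisfies ‖ρ*‖₂ ≤ ((Σ_n λ_n B_n) / (λ₀ q β₀^q))^{1/(q−1)}, where λ₀ > 0 is the weight of the regularization term C(ρ)^q (i.e., the term is λ₀ C(ρ)^q). -/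
open Filter Topology

/-- If every subgradient of a norm-like function `Nv` has Euclidean norm at most `Bn`,
then `Nv x ≤ Bn * ‖x‖` for all `x` (via Hahn–Banach extension of the tangent functional). -/
lemma aux_norm_bound (d : ℕ) (Nv : EuclideanSpace ℝ (Fin d) → ℝ)
    (hN_nonneg : ∀ x, 0 ≤ Nv x)
    (hN_add : ∀ x y, Nv (x + y) ≤ Nv x + Nv y)
    (hN_smul : ∀ (c : ℝ) x, Nv (c • x) = |c| * Nv x)
    (Bn : ℝ)
    (hBsub : ∀ (x g : EuclideanSpace ℝ (Fin d)),
      (∀ y, Nv x + (inner ℝ g (y - x) : ℝ) ≤ Nv y) → ‖g‖ ≤ Bn)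
    (x : EuclideanSpace ℝ (Fin d)) : Nv x ≤ Bn * ‖x‖ := by
  rcases eq_or_ne x 0 with rfl | hx
  · have h0 : Nv 0 = 0 := by
      have := hN_smul 0 0
      simpa using this
    simp [h0]
  · set f : EuclideanSpace ℝ (Fin d) →ₗ.[ℝ] ℝ :=
      LinearPMap.mkSpanSingleton x (Nv x) hx with hf
    obtain ⟨g, hg1, hg2⟩ := exists_extension_of_le_sublinear f Nv
      (fun c hc y => by rw [hN_smul, abs_of_pos hc])
      hN_add
      (by
        rintro ⟨z, hz⟩
        obtain ⟨c, rfl⟩ := Submodule.mem_span_singleton.1 hz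
        have : f ⟨c • x, hz⟩ = c • Nv x := LinearPMap.mkSpanSingleton'_apply _ _ _ c hz
        rw [this, hN_smul]
        exact mul_le_mul_of_nonneg_right (le_abs_self c) (hN_nonneg x))
    have hgx : g x = Nv x := by
      have hmem : x ∈ f.domain := Submodule.mem_span_singleton_self x
      have := hg1 ⟨x, hmem⟩
      rw [this]
      exact LinearPMap.mkSpanSingleton_apply ℝ ℝ hx (Nv x)
    set G := LinearMap.toContinuousLinearMap g with hG
    set v := (InnerProductSpace.toDual ℝ (EuclideanSpace ℝ (Fin d))).symm G with hv
    have hvy : ∀ y, (inner ℝ v y : ℝ) = g y := fun y =>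
      InnerProductSpace.toDual_symm_apply
    have hvB : ‖v‖ ≤ Bn := by
      apply hBsub x v
      intro y
      have : (inner ℝ v (y - x) : ℝ) = g y - g x := by
        rw [hvy (y - x), map_sub]
      rw [this, hgx]
      have := hg2 y
      linarith
    have : Nv x = (inner ℝ v x : ℝ) := by rw [hvy x, hgx]
    rw [this]
    calc (inner ℝ v x : ℝ) ≤ ‖v‖ * ‖x‖ := real_inner_le_norm v x
      _ ≤ Bn * ‖x‖ := mul_le_mul_of_nonneg_right hvB (norm_nonneg x)

/-- Absolute Byzantine resilience: any minimizer `(ρ*, θ*)` of the loss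
`L(ρ,θ) = λ₀ C(ρ)^q + Σ_n λ_n N_n(ρ - θ_n) + Σ_n ℓ_n(θ_n)` satisfies
`‖ρ*‖₂ ≤ ((Σ_n λ_n B_n)/(λ₀ q β₀^q))^(1/(q-1))`. -/
theorem stmt_19 (d M : ℕ)
    (C : EuclideanSpace ℝ (Fin d) → ℝ)
    (hC_nonneg : ∀ x, 0 ≤ C x)
    (hC_add : ∀ x y, C (x + y) ≤ C x + C y)
    (hC_smul : ∀ (c : ℝ) x, C (c • x) = |c| * C x)
    (hC_def : ∀ x, C x = 0 → x = 0)
    (Nf : Fin M → EuclideanSpace ℝ (Fin d) → ℝ)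
    (hN_nonneg : ∀ n x, 0 ≤ Nf n x)
    (hN_add : ∀ n x y, Nf n (x + y) ≤ Nf n x + Nf n y)
    (hN_smul : ∀ n (c : ℝ) x, Nf n (c • x) = |c| * Nf n x)
    (hN_def : ∀ n x, Nf n x = 0 → x = 0)
    (q : ℝ) (hq : 1 < q)
    (lam0 : ℝ) (hlam0 : 0 < lam0)
    (lam : Fin M → ℝ) (hlam : ∀ n, 0 < lam n)
    (β0 : ℝ) (hβ0 : 0 < β0) (hClow : ∀ ρ, β0 * ‖ρ‖ ≤ C ρ)
    (B : Fin M → ℝ) (hB : ∀ n, 0 < B n)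
    (hBsub : ∀ (n : Fin M) (x g : EuclideanSpace ℝ (Fin d)),
      (∀ y, Nf n x + (inner ℝ g (y - x) : ℝ) ≤ Nf n y) → ‖g‖ ≤ B n)
    (ℓ : Fin M → EuclideanSpace ℝ (Fin d) → ℝ)
    (hℓconv : ∀ n, ConvexOn ℝ Set.univ (ℓ n))
    (ρstar : EuclideanSpace ℝ (Fin d)) (θstar : Fin M → EuclideanSpace ℝ (Fin d))
    (hmin : ∀ (ρ : EuclideanSpace ℝ (Fin d)) (θ : Fin M → EuclideanSpace ℝ (Fin d)),
      lam0 * C ρstar ^ q + ∑ n, lam n * Nf n (ρstar - θstar n) + ∑ n, ℓ n (θstar n)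
        ≤ lam0 * C ρ ^ q + ∑ n, lam n * Nf n (ρ - θ n) + ∑ n, ℓ n (θ n)) :
    ‖ρstar‖ ≤ ((∑ n, lam n * B n) / (lam0 * q * β0 ^ q)) ^ (1 / (q - 1)) := by
  have Nbd : ∀ n x, Nf n x ≤ B n * ‖x‖ := fun n x =>
    aux_norm_bound d (Nf n) (hN_nonneg n) (hN_add n) (hN_smul n) (B n) (hBsub n) x
  set S : ℝ := ∑ n, lam n * Nf n ρstar with hS
  set K : ℝ := ∑ n, lam n * B n with hK
  have hq0 : (0:ℝ) < q := lt_trans one_pos hq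
  have hSK : S ≤ K * ‖ρstar‖ := by
    rw [hS, hK, Finset.sum_mul]
    refine Finset.sum_le_sum fun n _ => ?_
    rw [mul_assoc]
    exact mul_le_mul_of_nonneg_left (Nbd n ρstar) (hlam n).le
  have hK0 : 0 ≤ K := Finset.sum_nonneg fun n _ => mul_nonneg (hlam n).le (hB n).le
  set Cq : ℝ := C ρstar ^ q with hCq
  have hCq0 : 0 ≤ Cq := Real.rpow_nonneg (hC_nonneg _) q
  have key : ∀ t : ℝ, t ∈ Set.Ioo (0:ℝ) 1 → lam0 * Cq * (1 - t ^ q) ≤ (1 - t) * S := by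
    intro t ht
    obtain ⟨ht0, ht1⟩ := ht
    have h1 := hmin (t • ρstar) θstar
    have hsum : ∑ n, lam n * Nf n (t • ρstar - θstar n)
        ≤ ∑ n, lam n * Nf n (ρstar - θstar n) + (1 - t) * S := by
      rw [hS, Finset.mul_sum, ← Finset.sum_add_distrib]
      refine Finset.sum_le_sum fun n _ => ?_
      have heq : t • ρstar - θstar n = (ρstar - θstar n) + (t - 1) • ρstar := by
        rw [sub_smul, one_smul]; abel
      have h2 : Nf n (t • ρstar - θstar n) ≤ Nf n (ρstar - θstar n) + (1 - t) * Nf n ρstar := by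
        rw [heq]
        refine (hN_add n _ _).trans ?_
        have h3 : Nf n ((t - 1) • ρstar) = (1 - t) * Nf n ρstar := by
          rw [hN_smul, abs_of_neg (by linarith : t - 1 < 0)]; ring_nf
        linarith
      calc lam n * Nf n (t • ρstar - θstar n)
          ≤ lam n * (Nf n (ρstar - θstar n) + (1 - t) * Nf n ρstar) :=
            mul_le_mul_of_nonneg_left h2 (hlam n).le
        _ = lam n * Nf n (ρstar - θstar n) + (1 - t) * (lam n * Nf n ρstar) := by ring
    have hCt : C (t • ρstar) ^ q = t ^ q * Cq := by
      rw [hC_smul, abs_of_pos ht0, hCq, Real.mul_rpow ht0.le (hC_nonneg _)]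
    rw [hCt] at h1
    nlinarith [h1, hsum]
  -- limit argument: lam0 * Cq * q ≤ S
  have hlim : lam0 * Cq * q ≤ S := by
    have hd : HasDerivAt (fun t : ℝ => t ^ q) q 1 := by
      have := Real.hasDerivAt_rpow_const (x := 1) (p := q) (Or.inl one_ne_zero)
      simpa using this
    have hslope : Tendsto (slope (fun t : ℝ => t ^ q) 1) (𝓝[≠] (1:ℝ)) (𝓝 q) :=
      hasDerivAt_iff_tendsto_slope.1 hd
    have hslope' : Tendsto (slope (fun t : ℝ => t ^ q) 1) (𝓝[<] (1:ℝ)) (𝓝 q) :=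
      hslope.mono_left (nhdsWithin_mono 1 (fun x hx => ne_of_lt hx))
    have htend : Tendsto (fun t => lam0 * Cq * slope (fun s : ℝ => s ^ q) 1 t)
        (𝓝[<] (1:ℝ)) (𝓝 (lam0 * Cq * q)) := tendsto_const_nhds.mul hslope'
    refine le_of_tendsto htend ?_
    filter_upwards [Ioo_mem_nhdsLT_of_mem
      (Set.mem_Ioc.2 ⟨(by norm_num : (0:ℝ) < 1), le_refl (1:ℝ)⟩)] with t ht
    obtain ⟨ht0, ht1⟩ := ht
    have hkey := key t ⟨ht0, ht1⟩
    have hsl : slope (fun s : ℝ => s ^ q) 1 t = (1 - t ^ q) / (1 - t) := by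
      rw [slope_def_field, Real.one_rpow,
        div_eq_div_iff (sub_ne_zero.2 (ne_of_lt ht1)) (sub_ne_zero.2 (ne_of_gt ht1))]
      ring
    rw [hsl, ← mul_div_assoc, div_le_iff₀ (by linarith : (0:ℝ) < 1 - t)]
    linarith
  -- combine
  set A : ℝ := lam0 * q * β0 ^ q with hA
  have hA0 : 0 < A := by
    have : (0:ℝ) < β0 ^ q := Real.rpow_pos_of_pos hβ0 q
    positivity
  have hCl : β0 ^ q * ‖ρstar‖ ^ q ≤ Cq := by
    rw [← Real.mul_rpow hβ0.le (norm_nonneg _), hCq]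
    exact Real.rpow_le_rpow (by positivity) (hClow ρstar) hq0.le
  have hmain : A * ‖ρstar‖ ^ q ≤ K * ‖ρstar‖ := by
    have h4 : lam0 * q * (β0 ^ q * ‖ρstar‖ ^ q) ≤ lam0 * q * Cq :=
      mul_le_mul_of_nonneg_left hCl (by positivity)
    calc A * ‖ρstar‖ ^ q = lam0 * q * (β0 ^ q * ‖ρstar‖ ^ q) := by rw [hA]; ring
      _ ≤ lam0 * q * Cq := h4
      _ = lam0 * Cq * q := by ring
      _ ≤ S := hlim
      _ ≤ K * ‖ρstar‖ := hSK
  rcases eq_or_lt_of_le (norm_nonneg ρstar) with h0 | hR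
  · rw [← h0]
    exact Real.rpow_nonneg (div_nonneg hK0 hA0.le) _
  · have hq1 : q - 1 ≠ 0 := by intro h; rw [sub_eq_zero] at h; linarith
    have hsplit : ‖ρstar‖ ^ q = ‖ρstar‖ ^ (q - 1) * ‖ρstar‖ := by
      have := Real.rpow_add hR (q - 1) 1
      rw [sub_add_cancel] at this
      rw [this, Real.rpow_one]
    have hle : ‖ρstar‖ ^ (q - 1) ≤ K / A := by
      rw [le_div_iff₀ hA0]
      have h5 : A * ‖ρstar‖ ^ (q - 1) * ‖ρstar‖ ≤ K * ‖ρstar‖ := by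
        rw [mul_assoc, ← hsplit]; exact hmain
      have := (mul_le_mul_iff_of_pos_right hR).1 h5
      linarith
    have hfix : (‖ρstar‖ ^ (q - 1)) ^ (1 / (q - 1)) = ‖ρstar‖ := by
      rw [← Real.rpow_mul (norm_nonneg _), mul_one_div_cancel hq1, Real.rpow_one]
    calc ‖ρstar‖ = (‖ρstar‖ ^ (q - 1)) ^ (1 / (q - 1)) := hfix.symm
      _ ≤ (K / A) ^ (1 / (q - 1)) :=
        Real.rpow_le_rpow (Real.rpow_nonneg (norm_nonneg _) _) hle
          (div_nonneg one_pos.le (by linarith))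
end
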